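/- Let Ω ⊂ ℝ² be a convex bounded set with nonempty interior and let f : ℝ² → ℝ be continuous and twice differentiable at (0,0). If the quadratic form f''(0,0) is negative definite, then the zero function u ≡ 0 is not a local minimum of the functional F(u) = ∫_Ω f(∇u(x,y)) dx dy on U_Ω with respect to the C¹ norm: in every C¹-neighborhood of 0 there is a nonzero u ∈ U_Ω with F(u) < F(0). -/

import Mathlib

open MeasureTheory Real Set Filter Asymptotics

/-- The partial derivative `u_x` (defined via the full derivative; `0` where `u` is
not differentiable). -/
noncomputable def uX (u : ℝ × ℝ → ℝ) (p : ℝ × ℝ) : ℝ := fderiv ℝ u p (1, 0)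

/-- The partial derivative `u_y`. -/
noncomputable def uY (u : ℝ × ℝ → ℝ) (p : ℝ × ℝ) : ℝ := fderiv ℝ u p (0, 1)

/-- Membership in the class `U_Ω`: continuous concave functions on `Ω`, differentiable
almost everywhere, with bounded gradient, vanishing on `∂Ω`. -/
def MemU (Ω : Set (ℝ × ℝ)) (u : ℝ × ℝ → ℝ) : Prop :=
  ContinuousOn u (closure Ω) ∧ ConcaveOn ℝ Ω u ∧
    (∀ᵐ p ∂(volume.restrict Ω), DifferentiableAt ℝ u p) ∧
    (∃ C : ℝ, ∀ p ∈ Ω, DifferentiableAt ℝ u p → ‖fderiv ℝ u p‖ ≤ C) ∧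
    (∀ p ∈ frontier Ω, u p = 0)

/-- `∫_Ω u_x² dx dy`. -/
noncomputable def Ix (Ω : Set (ℝ × ℝ)) (u : ℝ × ℝ → ℝ) : ℝ := ∫ p in Ω, (uX u p) ^ 2

/-- `∫_Ω u_y² dx dy`. -/
noncomputable def Iy (Ω : Set (ℝ × ℝ)) (u : ℝ × ℝ → ℝ) : ℝ := ∫ p in Ω, (uY u p) ^ 2

/-- The abscissa of the left vertical support line of `Ω`. -/
noncomputable def leftX (Ω : Set (ℝ × ℝ)) : ℝ := sInf (Prod.fst '' Ω)

/-- The abscissa of the right vertical support line of `Ω`. -/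
noncomputable def rightX (Ω : Set (ℝ × ℝ)) : ℝ := sSup (Prod.fst '' Ω)

/-- The vertical support line `{x = x₀}` of `Ω`, touching `Ω` at the contact point
`(x₀, p₂)`, is angular: every `(x,y) ∈ Ω` satisfies `|y - p₂| ≤ C|x - x₀|`. -/
def AngularSupportAt (Ω : Set (ℝ × ℝ)) (x₀ : ℝ) : Prop :=
  ∃ p₂ : ℝ, (x₀, p₂) ∈ closure Ω ∧ ∃ C > 0, ∀ q ∈ Ω, |q.2 - p₂| ≤ C * |q.1 - x₀|

/-- The `C¹` norm `sup |u| + sup |u_x| + sup |u_y|`, the suprema over the derivatives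
being taken over the points where they exist. -/
noncomputable def C1Norm (Ω : Set (ℝ × ℝ)) (u : ℝ × ℝ → ℝ) : ℝ :=
  sSup ((fun p => |u p|) '' Ω) +
    sSup ((fun p => |uX u p|) '' {p ∈ Ω | DifferentiableAt ℝ u p}) +
    sSup ((fun p => |uY u p|) '' {p ∈ Ω | DifferentiableAt ℝ u p})

/-- The resistance functional `F(u) = ∫_Ω f(∇u) dx dy`. -/
noncomputable def Fres (Ω : Set (ℝ × ℝ)) (f : ℝ × ℝ → ℝ) (u : ℝ × ℝ → ℝ) : ℝ :=
  ∫ p in Ω, f (uX u p, uY u p)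

/-- The zero function is a local minimum of `F` on `U_Ω` in the `C¹` norm. -/
def ZeroIsLocalMin (Ω : Set (ℝ × ℝ)) (f : ℝ × ℝ → ℝ) : Prop :=
  ∃ δ : ℝ, 0 < δ ∧ ∀ u : ℝ × ℝ → ℝ, MemU Ω u → C1Norm Ω u < δ →
    Fres Ω f (fun _ => 0) ≤ Fres Ω f u

/-- `n` is an outward normal of a support line to `Ω` at `ξ`. -/
def IsSupportDir (Ω : Set (ℝ × ℝ)) (ξ n : ℝ × ℝ) : Prop :=
  n ≠ 0 ∧ ∀ q ∈ Ω, n.1 * q.1 + n.2 * q.2 ≤ n.1 * ξ.1 + n.2 * ξ.2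

/-- `ξ` is a regular boundary point: the support line at `ξ` is unique. -/
def IsRegularPoint (Ω : Set (ℝ × ℝ)) (ξ : ℝ × ℝ) : Prop :=
  ξ ∈ frontier Ω ∧
    ∀ n m : ℝ × ℝ, IsSupportDir Ω ξ n → IsSupportDir Ω ξ m → ∃ t : ℝ, m = t • n

/-- `ξ` is a singular boundary point: `Ω` has more than one support line at `ξ`. -/
def IsSingularPoint (Ω : Set (ℝ × ℝ)) (ξ : ℝ × ℝ) : Prop :=
  ξ ∈ frontier Ω ∧
    ∃ n m : ℝ × ℝ, IsSupportDir Ω ξ n ∧ IsSupportDir Ω ξ m ∧ ¬∃ t : ℝ, m = t • n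


section AuxDF

open Metric Topology Bornology

/-- The distance to the complement of `Ω`. -/
noncomputable def dF (Ω : Set (ℝ × ℝ)) (p : ℝ × ℝ) : ℝ := Metric.infDist p Ωᶜ

lemma dF_lip (Ω : Set (ℝ × ℝ)) : LipschitzWith 1 (dF Ω) := Metric.lipschitz_infDist_pt _

lemma dF_cont (Ω : Set (ℝ × ℝ)) : Continuous (dF Ω) := (dF_lip Ω).continuous

lemma dF_nonneg (Ω : Set (ℝ × ℝ)) (p : ℝ × ℝ) : 0 ≤ dF Ω p := Metric.infDist_nonneg

lemma dF_frontier (Ω : Set (ℝ × ℝ)) (p : ℝ × ℝ) (hp : p ∈ frontier Ω) : dF Ω p = 0 := by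
  apply Metric.infDist_zero_of_mem_closure
  rw [closure_compl]
  exact hp.2

lemma dF_compl (Ω : Set (ℝ × ℝ)) (p : ℝ × ℝ) (hp : p ∉ Ω) : dF Ω p = 0 :=
  Metric.infDist_zero_of_mem hp

lemma dF_pos (Ω : Set (ℝ × ℝ)) (hne : Ωᶜ.Nonempty) (p : ℝ × ℝ) (hp : p ∈ interior Ω) :
    0 < dF Ω p := by
  obtain ⟨r, hr, hball⟩ := Metric.isOpen_iff.mp isOpen_interior p hp
  have : r ≤ dF Ω p := by
    by_contra hc
    push_neg at hc
    obtain ⟨z, hz, hdz⟩ := (Metric.infDist_lt_iff hne).mp hc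
    exact hz (interior_subset (hball (by rwa [Metric.mem_ball, dist_comm])))
  linarith

lemma dF_concave (Ω : Set (ℝ × ℝ)) (hconv : Convex ℝ Ω) (hne : Ωᶜ.Nonempty) :
    ConcaveOn ℝ Ω (dF Ω) := by
  refine ⟨hconv, fun p hp q hq a b ha hb hab => ?_⟩
  set m := a • p + b • q with hm
  set D : ℝ := a • dF Ω p + b • dF Ω q with hD
  rcases le_or_gt D 0 with hD0 | hD0
  · exact hD0.trans (dF_nonneg Ω m)
  by_contra hc
  push_neg at hc
  obtain ⟨z, hz, hdz⟩ := (Metric.infDist_lt_iff hne).mp hc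
  set w := z - m with hw
  set α : ℝ := dF Ω p / D with hα
  set β : ℝ := dF Ω q / D with hβ
  have hαβ : a * α + b * β = 1 := by
    have hDne : D ≠ 0 := hD0.ne'
    rw [hα, hβ]
    field_simp
    simp [hD]
  have key : ∀ (x : ℝ × ℝ) (γ : ℝ), x ∈ Ω → 0 ≤ γ → γ * D ≤ dF Ω x → x + γ • w ∈ Ω := by
    intro x γ hx hγ hγD
    rcases eq_or_lt_of_le hγ with hγ0 | hγ0
    · simpa [← hγ0] using hx
    by_contra hxw
    have h1 : dF Ω x ≤ dist x (x + γ • w) := Metric.infDist_le_dist_of_mem hxw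
    have h2 : dist x (x + γ • w) = γ * ‖w‖ := by
      rw [dist_eq_norm]
      simp [norm_smul, abs_of_pos hγ0]
    have h3 : ‖w‖ < D := by
      calc ‖w‖ = dist z m := by rw [hw, dist_eq_norm]
      _ = dist m z := dist_comm z m
      _ < D := hdz
    nlinarith [hγD]
  have hpw : p + α • w ∈ Ω := by
    apply key p α hp (div_nonneg (dF_nonneg Ω p) hD0.le)
    rw [hα, div_mul_cancel₀]
    exact hD0.ne'
  have hqw : q + β • w ∈ Ω := by
    apply key q β hq (div_nonneg (dF_nonneg Ω q) hD0.le)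
    rw [hβ, div_mul_cancel₀]
    exact hD0.ne'
  have hzΩ : z ∈ Ω := by
    have : a • (p + α • w) + b • (q + β • w) = z := by
      have : a • (p + α • w) + b • (q + β • w) = (a • p + b • q) + (a * α + b * β) • w := by
        simp only [smul_add, smul_smul, add_smul]
        abel
      rw [this, hαβ, one_smul, hw, hm]
      abel
    rw [← this]
    exact hconv hpw hqw ha hb hab
  exact hz hzΩ

lemma dF_norm_fderiv_le (Ω : Set (ℝ × ℝ)) (p : ℝ × ℝ) : ‖fderiv ℝ (dF Ω) p‖ ≤ 1 := by
  by_cases h : DifferentiableAt ℝ (dF Ω) p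
  · simpa using norm_fderiv_le_of_lipschitz ℝ (f := dF Ω) (x₀ := p) (dF_lip Ω)
  · simp [fderiv_zero_of_not_differentiableAt h]

lemma dF_apply_le (Ω : Set (ℝ × ℝ)) (p : ℝ × ℝ) (v : ℝ × ℝ) :
    |fderiv ℝ (dF Ω) p v| ≤ ‖v‖ := by
  calc |fderiv ℝ (dF Ω) p v| ≤ ‖fderiv ℝ (dF Ω) p‖ * ‖v‖ :=
        (fderiv ℝ (dF Ω) p).le_opNorm v
  _ ≤ 1 * ‖v‖ := by gcongr; exact dF_norm_fderiv_le Ω p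
  _ = ‖v‖ := one_mul _

lemma dF_grad_lower (Ω : Set (ℝ × ℝ)) (hne : Ωᶜ.Nonempty) (p : ℝ × ℝ) (hp : p ∈ interior Ω)
    (hd : DifferentiableAt ℝ (dF Ω) p) :
    1 ≤ |fderiv ℝ (dF Ω) p (1, 0)| + |fderiv ℝ (dF Ω) p (0, 1)| := by
  have hdp : 0 < dF Ω p := dF_pos Ω hne p hp
  obtain ⟨q, hq, hqd⟩ := Metric.exists_mem_closure_infDist_eq_dist hne p
  have hpq : dist p q = dF Ω p := hqd.symm
  have hv : ∃ v : ℝ × ℝ, ‖v‖ = 1 ∧ q - p = dF Ω p • v := by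
    refine ⟨(dF Ω p)⁻¹ • (q - p), ?_, ?_⟩
    · rw [norm_smul, ← dist_eq_norm', hpq]
      simp [abs_of_pos hdp, inv_mul_cancel₀ hdp.ne']
    · rw [smul_smul, mul_inv_cancel₀ hdp.ne', one_smul]
  obtain ⟨v, hv1, hqp⟩ := hv
  have key : ∀ t ∈ Icc (0:ℝ) (dF Ω p), dF Ω (p + t • v) = dF Ω p - t := by
    intro t ht
    have hub : dF Ω (p + t • v) ≤ dF Ω p - t := by
      have h0 : dF Ω (p + t • v) ≤ dist (p + t • v) q := by
        rw [show dF Ω (p + t • v) = Metric.infDist (p + t • v) (closure Ωᶜ) from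
          (Metric.infDist_closure).symm]
        exact Metric.infDist_le_dist_of_mem hq
      calc dF Ω (p + t • v) ≤ dist (p + t • v) q := h0
      _ = ‖(t - dF Ω p) • v‖ := by
          rw [dist_eq_norm]
          congr 1
          rw [sub_smul]
          have : q = p + dF Ω p • v := by rw [← hqp]; abel
          rw [this]; abel
      _ = dF Ω p - t := by
          rw [norm_smul, hv1, mul_one, Real.norm_eq_abs, abs_of_nonpos (by linarith [ht.2])]
          ring
    have hlb : dF Ω p - t ≤ dF Ω (p + t • v) := by
      have := (dF_lip Ω).dist_le_mul p (p + t • v)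
      rw [Real.dist_eq] at this
      have hd2 : dist p (p + t • v) = t := by
        rw [dist_eq_norm]
        simp [norm_smul, hv1, abs_of_nonneg ht.1]
      rw [hd2] at this
      have := abs_le.mp (by simpa using this)
      linarith [this.1]
    linarith
  have hcurve : HasDerivAt (fun t : ℝ => p + t • v) v 0 := by
    simpa using ((hasDerivAt_id (0:ℝ)).smul_const v).const_add p
  have hg : HasDerivAt (fun t : ℝ => dF Ω (p + t • v)) (fderiv ℝ (dF Ω) p v) 0 := by
    have h1 : HasFDerivAt (dF Ω) (fderiv ℝ (dF Ω) p) ((fun t : ℝ => p + t • v) 0) := by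
      simpa using hd.hasFDerivAt
    exact h1.comp_hasDerivAt 0 hcurve
  have haff : HasDerivWithinAt (fun t : ℝ => dF Ω (p + t • v)) (-1) (Ici (0:ℝ)) 0 := by
    have h2 : HasDerivWithinAt (fun t : ℝ => dF Ω p - t) (-1) (Ici (0:ℝ)) 0 := by
      simpa using ((hasDerivAt_id (0:ℝ)).const_sub (dF Ω p)).hasDerivWithinAt
    apply h2.congr_of_eventuallyEq ?_ (by simp [key 0 ⟨le_refl 0, hdp.le⟩])
    have hIcc : Icc (0:ℝ) (dF Ω p) ∈ 𝓝[Ici (0:ℝ)] 0 := by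
      rw [show Icc (0:ℝ) (dF Ω p) = Ici (0:ℝ) ∩ Iic (dF Ω p) from (Ici_inter_Iic).symm]
      exact inter_mem self_mem_nhdsWithin (mem_nhdsWithin_of_mem_nhds (Iic_mem_nhds hdp))
    filter_upwards [hIcc] with t ht
    exact key t ht
  have huniq : fderiv ℝ (dF Ω) p v = -1 :=
    (uniqueDiffOn_Ici (0:ℝ) 0 self_mem_Ici).eq_deriv _ hg.hasDerivWithinAt haff
  have hvsplit : fderiv ℝ (dF Ω) p v = v.1 * fderiv ℝ (dF Ω) p (1, 0)
      + v.2 * fderiv ℝ (dF Ω) p (0, 1) := by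
    have : v = v.1 • ((1:ℝ), (0:ℝ)) + v.2 • ((0:ℝ), (1:ℝ)) := by
      ext <;> simp
    conv_lhs => rw [this]
    rw [map_add, ContinuousLinearMap.map_smul, ContinuousLinearMap.map_smul]
    simp
  have h1 : |v.1| ≤ 1 := by rw [← Real.norm_eq_abs, ← hv1]; exact norm_fst_le v
  have h2 : |v.2| ≤ 1 := by rw [← Real.norm_eq_abs, ← hv1]; exact norm_snd_le v
  calc (1:ℝ) = |fderiv ℝ (dF Ω) p v| := by rw [huniq]; norm_num
  _ = |v.1 * fderiv ℝ (dF Ω) p (1, 0) + v.2 * fderiv ℝ (dF Ω) p (0, 1)| := by rw [hvsplit]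
  _ ≤ |v.1 * fderiv ℝ (dF Ω) p (1, 0)| + |v.2 * fderiv ℝ (dF Ω) p (0, 1)| := abs_add_le _ _
  _ = |v.1| * |fderiv ℝ (dF Ω) p (1, 0)| + |v.2| * |fderiv ℝ (dF Ω) p (0, 1)| := by
      rw [abs_mul, abs_mul]
  _ ≤ 1 * |fderiv ℝ (dF Ω) p (1, 0)| + 1 * |fderiv ℝ (dF Ω) p (0, 1)| := by gcongr
  _ = |fderiv ℝ (dF Ω) p (1, 0)| + |fderiv ℝ (dF Ω) p (0, 1)| := by ring

lemma dF_hasCompactSupport (Ω : Set (ℝ × ℝ)) (hbdd : IsBounded Ω) :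
    HasCompactSupport (dF Ω) := by
  apply HasCompactSupport.of_support_subset_isCompact hbdd.isCompact_closure
  intro p hp
  by_contra hc
  exact hp (dF_compl Ω p (fun h => hc (subset_closure h)))

lemma integral_fderiv_dF (Ω : Set (ℝ × ℝ)) (hbdd : IsBounded Ω) (v : ℝ × ℝ) :
    ∫ p, fderiv ℝ (dF Ω) p v = 0 := by
  set d := dF Ω with hd
  have hlip : LipschitzWith 1 d := dF_lip Ω
  have hcs : HasCompactSupport d := dF_hasCompactSupport Ω hbdd
  set K := Metric.cthickening (‖v‖ + 1) (tsupport d) with hK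
  have K_compact : IsCompact K := hcs.cthickening
  have tendsto1 : Tendsto (fun t : ℝ => ∫ p, t⁻¹ • (d (p + t • v) - d p)) (𝓝[>] 0)
      (𝓝 (∫ p, fderiv ℝ d p v)) := by
    apply tendsto_integral_filter_of_dominated_convergence (K.indicator fun _ => ‖v‖)
    · filter_upwards with t
      apply AEStronglyMeasurable.const_smul'
      apply AEStronglyMeasurable.sub _ hlip.continuous.measurable.aestronglyMeasurable
      exact (hlip.continuous.comp (continuous_add_right _)).measurable.aestronglyMeasurable
    · filter_upwards [Ioc_mem_nhdsGT zero_lt_one] with t ht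
      have t_pos : 0 < t := ht.1
      filter_upwards with p
      by_cases hp : p ∈ K
      · have e1 : ‖t⁻¹ • (d (p + t • v) - d p)‖ = t⁻¹ * ‖d (p + t • v) - d p‖ := by
          simp [norm_smul, abs_of_pos t_pos]
        have e2 : ‖d (p + t • v) - d p‖ ≤ 1 * ‖(p + t • v) - p‖ :=
          hlip.norm_sub_le (p + t • v) p
        have e3 : (1:ℝ) * ‖(p + t • v) - p‖ = t * ‖v‖ := by
          simp [norm_smul, abs_of_pos t_pos]
        have e4 : ‖t⁻¹ • (d (p + t • v) - d p)‖ ≤ ‖v‖ := by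
          rw [e1]
          calc t⁻¹ * ‖d (p + t • v) - d p‖ ≤ t⁻¹ * (t * ‖v‖) := by
                rw [← e3]; gcongr
          _ = ‖v‖ := by field_simp
        rw [indicator_of_mem hp]
        exact e4
      · have A : d p = 0 := by
          rw [← Function.notMem_support]
          contrapose! hp
          exact self_subset_cthickening _ (subset_tsupport _ hp)
        have B : d (p + t • v) = 0 := by
          rw [← Function.notMem_support]
          contrapose! hp
          apply mem_cthickening_of_dist_le _ _ (‖v‖ + 1) (tsupport d) (subset_tsupport _ hp)
          simp only [dist_eq_norm, sub_add_cancel_left, norm_neg, norm_smul, Real.norm_eq_abs,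
            abs_of_nonneg t_pos.le]
          nlinarith [norm_nonneg v, ht.2]
        simp only [B, A, _root_.sub_self, smul_eq_mul, mul_zero, norm_zero]
        exact indicator_nonneg (fun y _ => norm_nonneg v) _
    · rw [integrable_indicator_iff K_compact.measurableSet]
      exact integrableOn_const K_compact.measure_lt_top.ne
    · filter_upwards [hlip.ae_differentiableAt] with p hp
      exact (hp.hasFDerivAt.hasLineDerivAt v).tendsto_slope_zero_right
  have eqzero : ∀ᶠ t : ℝ in 𝓝[>] 0, ∫ p, t⁻¹ • (d (p + t • v) - d p) = (0:ℝ) := by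
    filter_upwards [self_mem_nhdsWithin] with t ht
    have hint : Integrable d := hlip.continuous.integrable_of_hasCompactSupport hcs
    have hint2 : Integrable (fun p => d (p + t • v)) := by
      apply Continuous.integrable_of_hasCompactSupport
      · exact hlip.continuous.comp (continuous_add_right _)
      · exact hcs.comp_homeomorph (Homeomorph.addRight (t • v))
    rw [integral_smul, integral_sub hint2 hint, integral_add_right_eq_self, sub_self, smul_zero]
  have : Tendsto (fun _ : ℝ => (0:ℝ)) (𝓝[>] 0) (𝓝 (∫ p, fderiv ℝ d p v)) :=
    tendsto1.congr' eqzero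
  exact tendsto_nhds_unique this tendsto_const_nhds

lemma fderiv_dF_zero_outside (Ω : Set (ℝ × ℝ)) (p : ℝ × ℝ) (hp : p ∉ closure Ω) :
    fderiv ℝ (dF Ω) p = 0 := by
  have hev : dF Ω =ᶠ[𝓝 p] (fun _ => (0:ℝ)) := by
    filter_upwards [(isClosed_closure (s := Ω)).isOpen_compl.mem_nhds hp] with q hq
    exact dF_compl Ω q (fun h => hq (subset_closure h))
  rw [hev.fderiv_eq, fderiv_fun_const]
  rfl

lemma integrable_fderiv_dF (Ω : Set (ℝ × ℝ)) (hbdd : IsBounded Ω) (v : ℝ × ℝ) :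
    Integrable (fun p => fderiv ℝ (dF Ω) p v) := by
  apply Integrable.mono' (g := (closure Ω).indicator (fun _ => ‖v‖))
  · rw [integrable_indicator_iff hbdd.isCompact_closure.measurableSet]
    exact integrableOn_const hbdd.isCompact_closure.measure_lt_top.ne
  · exact (measurable_fderiv_apply_const ℝ (dF Ω) v).aestronglyMeasurable
  · filter_upwards with p
    by_cases hp : p ∈ closure Ω
    · rw [indicator_of_mem hp]
      exact dF_apply_le Ω p v
    · rw [indicator_of_notMem hp, fderiv_dF_zero_outside Ω p hp]
      simp

lemma setIntegral_fderiv_dF (Ω : Set (ℝ × ℝ)) (hconv : Convex ℝ Ω) (hbdd : IsBounded Ω)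
    (v : ℝ × ℝ) : ∫ p in Ω, fderiv ℝ (dF Ω) p v = 0 := by
  have hnm : NullMeasurableSet Ω (volume) := hconv.nullMeasurableSet _
  have hint := integrable_fderiv_dF Ω hbdd v
  have hsplit := integral_add_compl₀ hnm hint
  have hfr : (volume : Measure (ℝ × ℝ)) (frontier Ω) = 0 := hconv.addHaar_frontier _
  have hzero : ∫ p in Ωᶜ, fderiv ℝ (dF Ω) p v = 0 := by
    have hae : ∀ᵐ p ∂(volume.restrict Ωᶜ), fderiv ℝ (dF Ω) p v = 0 := by
      have h1 : ∀ᵐ p ∂(volume.restrict Ωᶜ), p ∉ frontier Ω :=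
        ae_restrict_of_ae ((ae_iff).mpr (by simpa using hfr))
      have h2 : ∀ᵐ p ∂(volume.restrict Ωᶜ), p ∈ Ωᶜ := ae_restrict_mem₀ hnm.compl
      filter_upwards [h1, h2] with p hp1 hp2
      have : p ∉ closure Ω := by
        intro hcl
        exact hp1 ⟨hcl, fun hi => hp2 (interior_subset hi)⟩
      rw [fderiv_dF_zero_outside Ω p this]
      rfl
    rw [integral_congr_ae hae]
    simp
  rw [hzero, add_zero] at hsplit
  rw [hsplit, integral_fderiv_dF Ω hbdd v]

lemma quad_bound (B : ℝ × ℝ →L[ℝ] ℝ × ℝ →L[ℝ] ℝ)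
    (hneg : ∀ v : ℝ × ℝ, v ≠ 0 → B v v < 0) :
    ∃ c > 0, ∀ v : ℝ × ℝ, B v v ≤ -c * ‖v‖ ^ 2 := by
  have hcont : Continuous fun v : ℝ × ℝ => B v v := B.continuous.clm_apply continuous_id
  have hsph : IsCompact (sphere (0 : ℝ × ℝ) 1) := isCompact_sphere 0 1
  have hne : (sphere (0 : ℝ × ℝ) 1).Nonempty := NormedSpace.sphere_nonempty.mpr zero_le_one
  obtain ⟨v₀, hv₀, hmax⟩ := hsph.exists_isMaxOn hne hcont.continuousOn
  have hv₀1 : ‖v₀‖ = 1 := mem_sphere_zero_iff_norm.mp hv₀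
  have hv₀0 : v₀ ≠ 0 := by intro h; rw [h] at hv₀1; simp at hv₀1
  refine ⟨-(B v₀ v₀), by linarith [hneg v₀ hv₀0], fun v => ?_⟩
  rcases eq_or_ne v 0 with rfl | hv
  · simp
  · have hnv : 0 < ‖v‖ := norm_pos_iff.mpr hv
    set w := ‖v‖⁻¹ • v with hwdef
    have hw : w ∈ sphere (0 : ℝ × ℝ) 1 := by
      simp [hwdef, norm_smul, abs_of_pos hnv, inv_mul_cancel₀ hnv.ne']
    have hvw : v = ‖v‖ • w := by rw [hwdef, smul_smul, mul_inv_cancel₀ hnv.ne', one_smul]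
    have hBv : B v v = ‖v‖ ^ 2 * B w w := by
      conv_lhs => rw [hvw]
      simp only [_root_.map_smul, ContinuousLinearMap.smul_apply, smul_eq_mul]
      ring
    have hle : B w w ≤ B v₀ v₀ := hmax hw
    rw [hBv]
    nlinarith [sq_nonneg ‖v‖, hnv]

end AuxDF

set_option maxHeartbeats 1000000 in
/-- If `f''(0,0)` is negative definite then `u ≡ 0` is not a local minimum: in every
`C¹`-neighborhood of `0` there is a nonzero `u ∈ U_Ω` with `F(u) < F(0)`. -/
theorem stmt4 (Ω : Set (ℝ × ℝ)) (hconv : Convex ℝ Ω) (hbdd : Bornology.IsBounded Ω)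
    (hint : (interior Ω).Nonempty) (f : ℝ × ℝ → ℝ) (hf : Continuous f)
    (L : ℝ × ℝ →L[ℝ] ℝ) (B : ℝ × ℝ →L[ℝ] ℝ × ℝ →L[ℝ] ℝ)
    (hsymm : ∀ v w : ℝ × ℝ, B v w = B w v)
    (hTaylor : (fun ζ : ℝ × ℝ => f ζ - f 0 - L ζ - (1 / 2) * B ζ ζ)
        =o[nhds (0 : ℝ × ℝ)] fun ζ : ℝ × ℝ => ‖ζ‖ ^ 2)
    (hneg : ∀ v : ℝ × ℝ, v ≠ 0 → B v v < 0) :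
    ∀ δ : ℝ, 0 < δ → ∃ u : ℝ × ℝ → ℝ, MemU Ω u ∧ (∃ p ∈ Ω, u p ≠ 0) ∧
      C1Norm Ω u < δ ∧ Fres Ω f u < Fres Ω f (fun _ => 0) := by
  intro δ hδ
  obtain ⟨p₀, hp₀⟩ := hint
  have hΩne : Ω.Nonempty := ⟨p₀, interior_subset hp₀⟩
  obtain ⟨Rb, hRb⟩ := hbdd.subset_closedBall (0 : ℝ × ℝ)
  -- the complement is nonempty
  set z₀ : ℝ × ℝ := (|Rb| + 1, 0) with hz₀def
  have hz₀norm : ‖z₀‖ = |Rb| + 1 := by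
    rw [hz₀def, Prod.norm_def]
    simp only [norm_zero, Real.norm_eq_abs]
    rw [abs_of_nonneg (by positivity : (0:ℝ) ≤ |Rb| + 1)]
    exact max_eq_left (by positivity)
  have hz₀ : z₀ ∉ Ω := by
    intro hmem
    have h := hRb hmem
    rw [Metric.mem_closedBall, dist_zero_right, hz₀norm] at h
    linarith [le_abs_self Rb]
  have hcne : Ωᶜ.Nonempty := ⟨z₀, hz₀⟩
  -- bound on dF over Ω
  set M : ℝ := 2 * |Rb| + 2 with hMdef
  have hM0 : 0 < M := by positivity
  have hdFM : ∀ p ∈ Ω, dF Ω p ≤ M := by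
    intro p hp
    have h1 : dF Ω p ≤ dist p z₀ := Metric.infDist_le_dist_of_mem hz₀
    have h2 : dist p z₀ ≤ ‖p‖ + ‖z₀‖ := by
      rw [dist_eq_norm]
      exact (norm_sub_le p z₀)
    have h3 : ‖p‖ ≤ |Rb| := by
      have := hRb hp
      rw [Metric.mem_closedBall, dist_zero_right] at this
      exact this.trans (le_abs_self Rb)
    rw [hz₀norm] at h2
    linarith
  -- negative-definiteness constant
  obtain ⟨c, hc, hBle⟩ := quad_bound B hneg
  -- remainder estimate
  set Rf : ℝ × ℝ → ℝ := fun ζ => f ζ - f 0 - L ζ - 1 / 2 * B ζ ζ with hRfdef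
  have hR := hTaylor.def (show (0:ℝ) < c / 16 by positivity)
  rw [Metric.eventually_nhds_iff] at hR
  obtain ⟨ρ, hρ, hRball⟩ := hR
  have hRest : ∀ ζ : ℝ × ℝ, ‖ζ‖ < ρ → |Rf ζ| ≤ c / 16 * ‖ζ‖ ^ 2 := by
    intro ζ h
    have := hRball (by rwa [dist_zero_right])
    rw [Real.norm_eq_abs, Real.norm_eq_abs, abs_of_nonneg (sq_nonneg ‖ζ‖)] at this
    exact this
  -- choice of ε
  set ε : ℝ := min (ρ / 2) (δ / (M + 3)) with hεdef
  have hε : 0 < ε := lt_min (by positivity) (by positivity)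
  have hερ : ε < ρ := (min_le_left _ _).trans_lt (by linarith)
  have hεδ : ε ≤ δ / (M + 3) := min_le_right _ _
  -- the competitor
  set u : ℝ × ℝ → ℝ := fun p => ε * dF Ω p with hu
  have ulip : LipschitzWith ε.toNNReal u := by
    refine LipschitzWith.of_dist_le_mul fun p q => ?_
    have h := (dF_lip Ω).dist_le_mul p q
    rw [Real.dist_eq] at h ⊢
    push_cast [NNReal.coe_one] at h
    rw [Real.coe_toNNReal _ hε.le]
    have : |u p - u q| = ε * |dF Ω p - dF Ω q| := by
      simp only [hu, ← mul_sub, abs_mul, abs_of_pos hε]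
    rw [this]
    have := abs_nonneg (dF Ω p - dF Ω q)
    nlinarith
  have hfdu : ∀ p, ‖fderiv ℝ u p‖ ≤ ε := by
    intro p
    by_cases hdp : DifferentiableAt ℝ u p
    · have := norm_fderiv_le_of_lipschitz ℝ ulip (x₀ := p)
      rwa [Real.coe_toNNReal _ hε.le] at this
    · simp [fderiv_zero_of_not_differentiableAt hdp, hε.le]
  have h10 : ‖((1:ℝ), (0:ℝ))‖ = 1 := by rw [Prod.norm_def]; simp
  have h01 : ‖((0:ℝ), (1:ℝ))‖ = 1 := by rw [Prod.norm_def]; simp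
  have hfduv : ∀ (p : ℝ × ℝ) (v : ℝ × ℝ), fderiv ℝ u p v = ε * fderiv ℝ (dF Ω) p v := by
    intro p v
    by_cases hdp : DifferentiableAt ℝ (dF Ω) p
    · rw [hu]
      rw [fderiv_const_mul hdp ε]
      simp
    · have hdu : ¬ DifferentiableAt ℝ u p := by
        intro hdu
        have h2 := hdu.const_mul ε⁻¹
        simp only [hu] at h2
        apply hdp
        have : (fun p => ε⁻¹ * (ε * dF Ω p)) = dF Ω := by
          funext q
          rw [← mul_assoc, inv_mul_cancel₀ hε.ne', one_mul]
        rwa [this] at h2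
      rw [fderiv_zero_of_not_differentiableAt hdu, fderiv_zero_of_not_differentiableAt hdp]
      simp
  -- the gradient components
  set Dx : ℝ × ℝ → ℝ := fun p => fderiv ℝ (dF Ω) p (1, 0) with hDxdef
  set Dy : ℝ × ℝ → ℝ := fun p => fderiv ℝ (dF Ω) p (0, 1) with hDydef
  have hDx1 : ∀ p, |Dx p| ≤ 1 := fun p => by
    have := dF_apply_le Ω p (1, 0); rwa [h10] at this
  have hDy1 : ∀ p, |Dy p| ≤ 1 := fun p => by
    have := dF_apply_le Ω p (0, 1); rwa [h01] at this
  set g : ℝ × ℝ → ℝ × ℝ := fun p => (uX u p, uY u p) with hgdef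
  have hgformula : ∀ p, g p = (ε * Dx p, ε * Dy p) := by
    intro p
    have e1 : uX u p = ε * Dx p := hfduv p (1, 0)
    have e2 : uY u p = ε * Dy p := hfduv p (0, 1)
    simp only [hgdef, e1, e2]
  have hgnorm : ∀ p, ‖g p‖ ≤ ε := by
    intro p
    rw [hgformula p, Prod.norm_def]
    apply max_le
    · rw [Real.norm_eq_abs, abs_mul, abs_of_pos hε]
      nlinarith [hDx1 p, abs_nonneg (Dx p)]
    · rw [Real.norm_eq_abs, abs_mul, abs_of_pos hε]
      nlinarith [hDy1 p, abs_nonneg (Dy p)]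
  -- measure-theoretic facts
  have hvolfin : volume Ω < ⊤ :=
    lt_of_le_of_lt (measure_mono subset_closure) hbdd.isCompact_closure.measure_lt_top
  haveI hfm : IsFiniteMeasure (volume.restrict Ω) :=
    ⟨by rwa [Measure.restrict_apply_univ]⟩
  have hvolpos : 0 < (volume Ω).toReal := by
    obtain ⟨r, hr, hball⟩ := Metric.isOpen_iff.mp isOpen_interior p₀ hp₀
    have h1 : 0 < volume (Metric.ball p₀ r) := Metric.measure_ball_pos _ _ hr
    have h2 : volume (Metric.ball p₀ r) ≤ volume Ω :=
      measure_mono (hball.trans interior_subset)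
    exact ENNReal.toReal_pos (lt_of_lt_of_le h1 h2).ne' hvolfin.ne
  have hgmeas : Measurable g := by
    have m1 : Measurable (fun p => fderiv ℝ u p ((1:ℝ), (0:ℝ))) :=
      measurable_fderiv_apply_const ℝ u _
    have m2 : Measurable (fun p => fderiv ℝ u p ((0:ℝ), (1:ℝ))) :=
      measurable_fderiv_apply_const ℝ u _
    exact m1.prodMk m2
  -- integrability of pieces
  obtain ⟨Cf, hCf⟩ :=
    (isCompact_closedBall (0 : ℝ × ℝ) ε).exists_bound_of_continuousOn hf.continuousOn
  have hfg_int : Integrable (fun p => f (g p)) (volume.restrict Ω) := by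
    apply Integrable.mono' (integrable_const Cf)
      ((hf.measurable.comp hgmeas).aestronglyMeasurable)
    filter_upwards with p
    exact hCf (g p) (Metric.mem_closedBall.mpr (by rw [dist_zero_right]; exact hgnorm p))
  have hDx_int : Integrable Dx (volume.restrict Ω) :=
    (integrable_fderiv_dF Ω hbdd (1, 0)).restrict
  have hDy_int : Integrable Dy (volume.restrict Ω) :=
    (integrable_fderiv_dF Ω hbdd (0, 1)).restrict
  have hLg_int : Integrable (fun p => L (g p)) (volume.restrict Ω) := by
    apply Integrable.mono' (integrable_const (‖L‖ * ε))
      ((L.continuous.measurable.comp hgmeas).aestronglyMeasurable)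
    filter_upwards with p
    calc ‖L (g p)‖ ≤ ‖L‖ * ‖g p‖ := L.le_opNorm (g p)
    _ ≤ ‖L‖ * ε := by gcongr; exact hgnorm p
  have hT2_int : Integrable (fun p => f (g p) - f 0 - L (g p)) (volume.restrict Ω) :=
    (hfg_int.sub (integrable_const (f 0))).sub hLg_int
  -- the linear term integrates to zero
  have hLsplit : ∀ a b : ℝ, L (a, b) = a * L (1, 0) + b * L (0, 1) := by
    intro a b
    have h : ((a, b) : ℝ × ℝ) = a • ((1:ℝ), (0:ℝ)) + b • ((0:ℝ), (1:ℝ)) := by ext <;> simp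
    rw [h, map_add, ContinuousLinearMap.map_smul, ContinuousLinearMap.map_smul]
    simp
  have hintT1 : ∫ p in Ω, L (g p) = 0 := by
    have hpointwise : ∀ p, L (g p) = ε * L (1, 0) * Dx p + ε * L (0, 1) * Dy p := by
      intro p
      rw [hgformula p, hLsplit]
      ring
    rw [integral_congr_ae (ae_of_all _ hpointwise)]
    rw [integral_add ((hDx_int.const_mul _)) ((hDy_int.const_mul _)), integral_const_mul,
      integral_const_mul]
    have e1 : ∫ p in Ω, Dx p = 0 := setIntegral_fderiv_dF Ω hconv hbdd (1, 0)
    have e2 : ∫ p in Ω, Dy p = 0 := setIntegral_fderiv_dF Ω hconv hbdd (0, 1)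
    rw [e1, e2, mul_zero, mul_zero, add_zero]
  -- the quadratic + remainder term is uniformly negative a.e.
  set κ : ℝ := c * ε ^ 2 / 16 with hκdef
  have hκ : 0 < κ := by positivity
  have haeT2 : ∀ᵐ p ∂(volume.restrict Ω), f (g p) - f 0 - L (g p) ≤ -κ := by
    have h1 : ∀ᵐ p ∂(volume.restrict Ω), DifferentiableAt ℝ (dF Ω) p :=
      ae_restrict_of_ae (dF_lip Ω).ae_differentiableAt
    have h2 : ∀ᵐ p : ℝ × ℝ, p ∉ frontier Ω :=
      (ae_iff).mpr (by simpa using hconv.addHaar_frontier (volume : Measure (ℝ × ℝ)))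
    have h2' : ∀ᵐ p ∂(volume.restrict Ω), p ∉ frontier Ω := ae_restrict_of_ae h2
    have h3 : ∀ᵐ p ∂(volume.restrict Ω), p ∈ Ω :=
      ae_restrict_mem₀ (hconv.nullMeasurableSet _)
    filter_upwards [h1, h2', h3] with p hdp hfp hpΩ
    have hpint : p ∈ interior Ω := by
      by_contra hni
      exact hfp ⟨subset_closure hpΩ, hni⟩
    have hlow : 1 ≤ |Dx p| + |Dy p| := dF_grad_lower Ω hcne p hpint hdp
    have hgsq : ε ^ 2 / 4 ≤ ‖g p‖ ^ 2 := by
      have hmax : 1 / 2 ≤ max |Dx p| |Dy p| := by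
        rcases le_total |Dx p| |Dy p| with h | h
        · rw [max_eq_right h]; linarith
        · rw [max_eq_left h]; linarith
      have hnormg : ‖g p‖ = ε * max |Dx p| |Dy p| := by
        rw [hgformula p, Prod.norm_def, Real.norm_eq_abs, Real.norm_eq_abs, abs_mul, abs_mul,
          abs_of_pos hε, ← mul_max_of_nonneg _ _ hε.le]
      have hm0 : (0:ℝ) ≤ |Dx p| ⊔ |Dy p| := le_trans (by norm_num) hmax
      have hmm : (1:ℝ)/4 ≤ (|Dx p| ⊔ |Dy p|) * (|Dx p| ⊔ |Dy p|) := by nlinarith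
      rw [hnormg, mul_pow]
      nlinarith [hmm, sq_nonneg ε]
    have hBgg : B (g p) (g p) ≤ -(c * ε ^ 2) / 4 := by
      calc B (g p) (g p) ≤ -c * ‖g p‖ ^ 2 := hBle (g p)
      _ ≤ -(c * ε ^ 2) / 4 := by nlinarith [hgsq, hc]
    have hRfb : |Rf (g p)| ≤ c * ε ^ 2 / 16 := by
      have h := hRest (g p) (lt_of_le_of_lt (hgnorm p) hερ)
      have hsq : ‖g p‖ ^ 2 ≤ ε ^ 2 := by nlinarith [hgnorm p, norm_nonneg (g p)]
      have h2 : c / 16 * ‖g p‖ ^ 2 ≤ c * ε ^ 2 / 16 := by nlinarith [hsq, hc]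
      linarith
    have hid : f (g p) - f 0 - L (g p) = 1 / 2 * B (g p) (g p) + Rf (g p) := by
      rw [hRfdef]
      ring
    rw [hid, hκdef]
    have := (abs_le.mp hRfb).2
    linarith
  have hintT2 : ∫ p in Ω, (f (g p) - f 0 - L (g p)) ≤ -κ * (volume Ω).toReal := by
    have h := integral_mono_ae hT2_int (integrable_const (-κ)) haeT2
    rwa [integral_const, measureReal_restrict_apply_univ, measureReal_def, smul_eq_mul, mul_comm] at h
  -- conclusion on the functional
  have hFres : Fres Ω f u < Fres Ω f (fun _ => 0) := by
    have hFu : Fres Ω f u = ∫ p in Ω, f (g p) := rfl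
    have hF0 : Fres Ω f (fun _ => 0) = ∫ p in Ω, f 0 := by
      unfold Fres uX uY
      congr 1
      funext p
      rw [fderiv_fun_const]
      norm_num
      rfl
    rw [hFu, hF0]
    have hdiff : (∫ p in Ω, f (g p)) - ∫ p in Ω, f 0 ≤ -κ * (volume Ω).toReal := by
      rw [← integral_sub hfg_int (integrable_const (f 0))]
      have hsplit2 : (fun p => f (g p) - f 0)
          = fun p => L (g p) + (f (g p) - f 0 - L (g p)) := by
        funext p; ring
      rw [hsplit2, integral_add hLg_int hT2_int, hintT1, zero_add]
      exact hintT2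
    nlinarith [mul_pos hκ hvolpos]
  -- MemU
  have hMemU : MemU Ω u := by
    refine ⟨(continuous_const.mul (dF_cont Ω)).continuousOn, ?_, ?_, ⟨ε, fun p _ _ => hfdu p⟩, ?_⟩
    · have h := (dF_concave Ω hconv hcne).smul hε.le
      have he : u = ε • dF Ω := by funext p; simp [hu]
      rw [he]
      exact h
    · filter_upwards [ae_restrict_of_ae (dF_lip Ω).ae_differentiableAt] with p hp
      exact hp.const_mul ε
    · intro p hp
      show ε * dF Ω p = 0
      rw [dF_frontier Ω p hp, mul_zero]
  -- nonvanishing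
  have hnz : ∃ p ∈ Ω, u p ≠ 0 := by
    refine ⟨p₀, interior_subset hp₀, ?_⟩
    have h := dF_pos Ω hcne p₀ hp₀
    show ε * dF Ω p₀ ≠ 0
    positivity
  -- C¹ norm bound
  have hC1 : C1Norm Ω u < δ := by
    have hS1 : sSup ((fun p => |u p|) '' Ω) ≤ ε * M := by
      apply Real.sSup_le
      · rintro x ⟨p, hp, rfl⟩
        show |ε * dF Ω p| ≤ ε * M
        rw [abs_mul, abs_of_pos hε, abs_of_nonneg (dF_nonneg Ω p)]
        have := hdFM p hp
        nlinarith
      · positivity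
    have hS2 : sSup ((fun p => |uX u p|) '' {p ∈ Ω | DifferentiableAt ℝ u p}) ≤ ε := by
      apply Real.sSup_le
      · rintro x ⟨p, hp, rfl⟩
        show |uX u p| ≤ ε
        rw [show uX u p = fderiv ℝ u p (1, 0) from rfl]
        calc |fderiv ℝ u p (1, 0)| ≤ ‖fderiv ℝ u p‖ * ‖((1:ℝ), (0:ℝ))‖ :=
              (fderiv ℝ u p).le_opNorm _
        _ = ‖fderiv ℝ u p‖ := by rw [h10, mul_one]
        _ ≤ ε := hfdu p
      · exact hε.le
    have hS3 : sSup ((fun p => |uY u p|) '' {p ∈ Ω | DifferentiableAt ℝ u p}) ≤ ε := by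
      apply Real.sSup_le
      · rintro x ⟨p, hp, rfl⟩
        show |uY u p| ≤ ε
        rw [show uY u p = fderiv ℝ u p (0, 1) from rfl]
        calc |fderiv ℝ u p (0, 1)| ≤ ‖fderiv ℝ u p‖ * ‖((0:ℝ), (1:ℝ))‖ :=
              (fderiv ℝ u p).le_opNorm _
        _ = ‖fderiv ℝ u p‖ := by rw [h01, mul_one]
        _ ≤ ε := hfdu p
      · exact hε.le
    have hsum : C1Norm Ω u ≤ ε * M + ε + ε := by
      unfold C1Norm
      gcongr
    have hfinal : ε * M + ε + ε < δ := by
      have h1 : ε * (M + 2) ≤ δ / (M + 3) * (M + 2) := by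
        have hM2 : (0:ℝ) ≤ M + 2 := by linarith
        exact mul_le_mul_of_nonneg_right hεδ hM2
      have h2 : δ / (M + 3) * (M + 2) < δ := by
        rw [div_mul_eq_mul_div, div_lt_iff₀ (by linarith : (0:ℝ) < M + 3)]
        nlinarith
      nlinarith
    linarith
  exact ⟨u, hMemU, hnz, hC1, hFres⟩
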